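/- Let n ≥ 5 and let W be a weight function on the cycle graph C_n. Then (C_n, W) is CL2 if and only if n is even and W is identically zero. -/

import Mathlib

open scoped Classical

/-- The cycle graph `C_n` on vertices `ZMod n`, with `i` adjacent to `i + 1` and `i - 1`. -/
def cycleGraph (n : ℕ) : SimpleGraph (ZMod n) where
  Adj i j := i ≠ j ∧ (j = i + 1 ∨ j = i - 1)
  symm := by
    constructor
    rintro i j ⟨h, h1 | h1⟩
    · exact ⟨h.symm, Or.inr (by rw [h1]; ring)⟩
    · exact ⟨h.symm, Or.inl (by rw [h1]; ring)⟩
  loopless := ⟨fun i h => h.1 rfl⟩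

/-- Adjacency function of a simple graph, with values in `ZMod 2`:
`adjE G x y = 1` iff `x` and `y` are adjacent. -/
noncomputable def adjE {V : Type*} (G : SimpleGraph V) (x y : V) : ZMod 2 :=
  if G.Adj x y then 1 else 0

/-- The weighted Rosenstiehl form `R_W x y = E x y + Σ_{z ∈ N(x) ∩ N(y)} W z` in `ZMod 2`. -/
noncomputable def wRosForm {V : Type*} (G : SimpleGraph V) (W : V → ZMod 2) (x y : V) :
    ZMod 2 :=
  adjE G x y + ∑ᶠ z ∈ G.neighborSet x ∩ G.neighborSet y, W z

/-- Weighted (EN2): `R_W x y = 0` for all distinct non-adjacent `x`, `y`. -/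
def wEN2 {V : Type*} (G : SimpleGraph V) (W : V → ZMod 2) : Prop :=
  ∀ x y : V, x ≠ y → ¬ G.Adj x y → wRosForm G W x y = 0

/-- Weighted (RC): the weighted Rosenstiehl form is a coboundary on the edges. -/
def wRC {V : Type*} (G : SimpleGraph V) (W : V → ZMod 2) : Prop :=
  ∃ χ : V → ZMod 2, ∀ x y : V, G.Adj x y → wRosForm G W x y = χ x + χ y

/-- A weighted graph is CL2 when it satisfies weighted (EN2) and weighted (RC). -/
def CL2 {V : Type*} (G : SimpleGraph V) (W : V → ZMod 2) : Prop :=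
  wEN2 G W ∧ wRC G W

/-- For `n ≥ 5`, a weighting `W` of the cycle graph `C_n` is CL2 iff `n` is even
and `W` is identically zero. -/
theorem stmt2 (n : ℕ) (hn : 5 ≤ n) (W : ZMod n → ZMod 2) :
    CL2 (cycleGraph n) W ↔ (Even n ∧ W = 0) := by
  haveI : NeZero n := ⟨by omega⟩
  haveI : Fact (1 < n) := ⟨by omega⟩
  have hcast : ∀ k : ℕ, 0 < k → k < n → ((k : ℕ) : ZMod n) ≠ 0 := by
    intro k hk hkn h
    rw [ZMod.natCast_eq_zero_iff] at h
    exact absurd (Nat.le_of_dvd hk h) (by omega)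
  have h1 : (1 : ZMod n) ≠ 0 := by simpa using hcast 1 (by omega) (by omega)
  have h2 : (2 : ZMod n) ≠ 0 := by simpa using hcast 2 (by omega) (by omega)
  have h3 : (3 : ZMod n) ≠ 0 := by simpa using hcast 3 (by omega) (by omega)
  have h4 : (4 : ZMod n) ≠ 0 := by simpa using hcast 4 (by omega) (by omega)
  have adj_succ : ∀ x : ZMod n, (cycleGraph n).Adj x (x + 1) := by
    intro x
    exact ⟨fun h => h1 (by linear_combination -h), Or.inl rfl⟩
  have interA : ∀ x : ZMod n,
      (cycleGraph n).neighborSet x ∩ (cycleGraph n).neighborSet (x + 1) = ∅ := by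
    intro x
    ext z
    simp only [Set.mem_inter_iff, SimpleGraph.mem_neighborSet, Set.mem_empty_iff_false,
      iff_false]
    rintro ⟨⟨ha, hb | hb⟩, ⟨hc, hd | hd⟩⟩
    · exact hc hb.symm
    · exact hc hb.symm
    · exact h3 (by linear_combination hb - hd)
    · exact h1 (by linear_combination hb - hd)
  have interB : ∀ x : ZMod n,
      (cycleGraph n).neighborSet x ∩ (cycleGraph n).neighborSet (x + 2) = {x + 1} := by
    intro x
    ext z
    simp only [Set.mem_inter_iff, SimpleGraph.mem_neighborSet, Set.mem_singleton_iff]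
    constructor
    · rintro ⟨⟨ha, hb | hb⟩, ⟨hc, hd | hd⟩⟩
      · exact absurd (by linear_combination hb - hd : (2 : ZMod n) = 0) h2
      · exact hb
      · exact absurd (by linear_combination hb - hd : (4 : ZMod n) = 0) h4
      · exact absurd (by linear_combination hb - hd : (2 : ZMod n) = 0) h2
    · rintro rfl
      exact ⟨adj_succ x, ⟨fun h => h1 (by linear_combination h), Or.inr (by ring)⟩⟩
  have Rsucc : ∀ x : ZMod n, wRosForm (cycleGraph n) W x (x + 1) = 1 := by
    intro x
    rw [wRosForm, interA, finsum_mem_empty, adjE, if_pos (adj_succ x), add_zero]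
  have Rsymm : ∀ x y : ZMod n,
      wRosForm (cycleGraph n) W x y = wRosForm (cycleGraph n) W y x := by
    intro x y
    rw [wRosForm, wRosForm, Set.inter_comm]
    congr 1
    simp [adjE, SimpleGraph.adj_comm]
  constructor
  · rintro ⟨hen2, χ, hrc⟩
    constructor
    · -- Even n
      have key : ∀ k : ℕ, χ ((k : ℕ) : ZMod n) = χ 0 + (k : ZMod 2) := by
        intro k
        induction k with
        | zero => simp
        | succ k ih =>
          have h := hrc ((k : ℕ) : ZMod n) (((k : ℕ) : ZMod n) + 1) (adj_succ _)
          rw [Rsucc] at h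
          have d : ∀ a b : ZMod 2, (1 : ZMod 2) = a + b → b = a + 1 := by decide
          have step := d _ _ h
          push_cast
          rw [step, ih]
          ring
      have hkey := key n
      rw [ZMod.natCast_self] at hkey
      have d : ∀ a b : ZMod 2, a = a + b → b = 0 := by decide
      have hz : ((n : ℕ) : ZMod 2) = 0 := d _ _ hkey
      rw [ZMod.natCast_eq_zero_iff] at hz
      exact even_iff_two_dvd.mpr hz
    · -- W = 0
      funext v
      have hne : v - 1 ≠ v + 1 := fun h => h2 (by linear_combination -h)
      have hnadj : ¬ (cycleGraph n).Adj (v - 1) (v + 1) := by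
        rintro ⟨-, h | h⟩
        · exact h1 (by linear_combination h)
        · exact h3 (by linear_combination h)
      have hE := hen2 (v - 1) (v + 1) hne hnadj
      have hrw : v + 1 = (v - 1) + 2 := by ring
      rw [wRosForm, hrw, interB, finsum_mem_singleton, adjE, if_neg (hrw ▸ hnadj),
        zero_add] at hE
      have hvv : v - 1 + 1 = v := by ring
      rw [hvv] at hE
      exact hE
  · rintro ⟨hev, rfl⟩
    constructor
    · intro x y hxy hnadj
      rw [wRosForm, adjE, if_neg hnadj]
      simp
    · refine ⟨fun i => ((i.val : ℕ) : ZMod 2), ?_⟩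
      have hn0 : ((n : ℕ) : ZMod 2) = 0 := by
        rw [ZMod.natCast_eq_zero_iff]
        exact even_iff_two_dvd.mp hev
      have hchi : ∀ x : ZMod n, (((x + 1).val : ℕ) : ZMod 2) = ((x.val : ℕ) : ZMod 2) + 1 := by
        intro x
        have step : (((x.val + 1) % n : ℕ) : ZMod 2) = ((x.val + 1 : ℕ) : ZMod 2) := by
          conv_rhs => rw [← Nat.div_add_mod (x.val + 1) n]
          push_cast [hn0]
          ring
        rw [ZMod.val_add, ZMod.val_one, step]
        push_cast
        ring
      rintro x y ⟨hne, rfl | rfl⟩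
      · dsimp only
        rw [Rsucc, hchi]
        have d : ∀ a : ZMod 2, (1 : ZMod 2) = a + (a + 1) := by decide
        exact d _
      · dsimp only
        rw [Rsymm]
        have hr : wRosForm (cycleGraph n) 0 (x - 1) x = 1 := by
          have h := Rsucc (x - 1)
          rwa [sub_add_cancel] at h
        rw [hr]
        have hc := hchi (x - 1)
        rw [sub_add_cancel] at hc
        rw [hc]
        have d : ∀ a : ZMod 2, (1 : ZMod 2) = (a + 1) + a := by decide
        exact d _
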